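/- Let E be a real normed vector space, p : E → ℝ differentiable at θ₀ with p(θ₀) > 0, let p_old > 0 be a constant, and set r(θ) = p(θ)/p_old. Let ε > 0 and A ≥ 0 be real numbers with r(θ₀) ≠ 1+ε, and assume p is continuous in a neighborhood of θ₀. Then the PPO surrogate L(θ) = min( r(θ)·A, max(1−ε, min(r(θ), 1+ε))·A ) is differentiable at θ₀ and its Fréchet derivative equals (if r(θ₀) < 1+ε then A·r(θ₀) else 0) • D(log ∘ p)(θ₀). Equivalently, writing ω = min(r(θ₀), 1+ε), the derivative is ω·𝟙[ω ≠ 1+ε]·A·∇ log p(θ₀). -/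

import Mathlib

/-- Gradient of PPO's clipped surrogate, positive-advantage branch: if `A ≥ 0` and the
ratio `r(θ₀) = p(θ₀)/p_old` is not at the clipping boundary `1+ε`, then the
surrogate is differentiable at `θ₀` with Fréchet derivative
`(if r(θ₀) < 1+ε then A·r(θ₀) else 0) • D(log ∘ p)(θ₀)`;
in particular clipped samples contribute zero gradient. -/
theorem ppo_clipped_objective_gradient_pos
    {E : Type*} [NormedAddCommGroup E] [NormedSpace ℝ E]
    (p : E → ℝ) (θ₀ : E) (hdiff : DifferentiableAt ℝ p θ₀) (hppos : 0 < p θ₀)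
    (pold : ℝ) (hpold : 0 < pold)
    (ε A : ℝ) (hε : 0 < ε) (hA : 0 ≤ A)
    (hne : p θ₀ / pold ≠ 1 + ε)
    (hcont : ∃ U ∈ nhds θ₀, ContinuousOn p U) :
    HasFDerivAt
      (fun θ => min (p θ / pold * A)
        (max (1 - ε) (min (p θ / pold) (1 + ε)) * A))
      ((if p θ₀ / pold < 1 + ε then A * (p θ₀ / pold) else 0) •
        fderiv ℝ (fun θ => Real.log (p θ)) θ₀)
      θ₀ := by
  have hp0 : p θ₀ ≠ 0 := ne_of_gt hppos
  have hlog : HasFDerivAt (fun θ => Real.log (p θ)) ((p θ₀)⁻¹ • fderiv ℝ p θ₀) θ₀ :=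
    (hdiff.hasFDerivAt).log hp0
  rw [hlog.fderiv]
  have hfun : ∀ θ, min (p θ / pold * A) (max (1 - ε) (min (p θ / pold) (1 + ε)) * A)
      = min (p θ / pold) (1 + ε) * A := by
    intro θ
    set r := p θ / pold with hr
    rcases le_total r (1 - ε) with h | h <;> rcases le_total r (1 + ε) with h2 | h2 <;>
      simp only [min_def, max_def] <;> split_ifs <;> nlinarith
  have hcontr : ContinuousAt (fun θ => p θ / pold) θ₀ := (hdiff.continuousAt).div_const pold
  by_cases hlt : p θ₀ / pold < 1 + ε
  · rw [if_pos hlt]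
    have hev : ∀ᶠ θ in nhds θ₀, p θ / pold < 1 + ε :=
      hcontr.eventually_lt_const hlt
    have hder : HasFDerivAt (fun θ => p θ / pold * A)
        ((A * (p θ₀ / pold)) • ((p θ₀)⁻¹ • fderiv ℝ p θ₀)) θ₀ := by
      have h1 : HasFDerivAt (fun θ => p θ / pold * A)
          (A • (pold⁻¹ • fderiv ℝ p θ₀)) θ₀ := by
        simpa [div_eq_mul_inv] using
          ((hdiff.hasFDerivAt.mul_const pold⁻¹).mul_const A)
      convert h1 using 1
      rw [smul_smul, smul_smul]
      congr 1
      field_simp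
    refine hder.congr_of_eventuallyEq ?_
    filter_upwards [hev] with θ hθ
    rw [hfun θ, min_eq_left hθ.le]
  · rw [if_neg hlt, zero_smul]
    have hgt : 1 + ε < p θ₀ / pold := lt_of_le_of_ne (not_lt.mp hlt) (Ne.symm hne)
    have hev : ∀ᶠ θ in nhds θ₀, 1 + ε < p θ / pold :=
      hcontr.eventually_const_lt hgt
    refine (hasFDerivAt_const ((1 + ε) * A) θ₀).congr_of_eventuallyEq ?_
    filter_upwards [hev] with θ hθ
    rw [hfun θ, min_eq_right hθ.le]
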